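/- Let G be a connected 2-diregular digraph and S a minimal split-set. Then |S| is even. -/

import Mathlib

/-- In-degree of `v` in arc set `B`: number of arcs ending at `v`. -/
def inDeg {V : Type*} [DecidableEq V] (B : Finset (V × V)) (v : V) : ℕ :=
  (B.filter fun a => a.2 = v).card

/-- Out-degree of `v` in arc set `B`: number of arcs starting at `v`. -/
def outDeg {V : Type*} [DecidableEq V] (B : Finset (V × V)) (v : V) : ℕ :=
  (B.filter fun a => a.1 = v).card

/-- Vertices of the graph obtained from `(V, A)` by splitting the vertices of `S`:
`(v, false)` is `v` itself (or `v^out` when `v ∈ S`), and `(v, true)` is `v^in`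
for `v ∈ S`. -/
def splitVerts {V : Type*} [Fintype V] [DecidableEq V] (S : Finset V) :
    Finset (V × Bool) :=
  (Finset.univ.image fun v => (v, false)) ∪ (S.image fun v => (v, true))

/-- Arcs of the graph obtained from `(V, A)` by splitting the vertices of `S`:
an arc `(u, w)` ends at `w^in = (w, true)` if `w ∈ S`, else at `(w, false)`;
it starts at `(u, false)` (which is `u^out` when `u ∈ S`). -/
def splitArcs {V : Type*} [Fintype V] [DecidableEq V] (A : Finset (V × V)) (S : Finset V) :
    Finset ((V × Bool) × (V × Bool)) :=
  A.image fun a => ((a.1, false), (a.2, if a.2 ∈ S then true else false))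

/-- Reachability in the underlying undirected graph of the split graph. -/
def splitReach {V : Type*} [Fintype V] [DecidableEq V] (A : Finset (V × V)) (S : Finset V) :
    V × Bool → V × Bool → Prop :=
  Relation.ReflTransGen (fun x y => (x, y) ∈ splitArcs A S ∨ (y, x) ∈ splitArcs A S)

/-- The graph obtained by splitting `S` is connected (as an undirected graph). -/
def SplitConnected {V : Type*} [Fintype V] [DecidableEq V] (A : Finset (V × V))
    (S : Finset V) : Prop :=
  ∀ x ∈ splitVerts (V := V) S, ∀ y ∈ splitVerts (V := V) S, splitReach A S x y

section Aux

variable {V : Type*} [Fintype V] [DecidableEq V]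

lemma mem_splitVerts {S : Finset V} {x : V × Bool} :
    x ∈ splitVerts S ↔ x.2 = false ∨ x.1 ∈ S := by
  obtain ⟨u, b⟩ := x
  cases b <;> simp [splitVerts, Prod.ext_iff]

lemma splitReach_symm {A : Finset (V × V)} {S : Finset V} {x y : V × Bool}
    (h : splitReach A S x y) : splitReach A S y x := by
  induction h with
  | refl => exact .refl
  | tail _ h2 ih => exact Relation.ReflTransGen.trans (.single h2.symm) ih

lemma splitReach_arc {A : Finset (V × V)} {S : Finset V} {a : V × V} (ha : a ∈ A) :
    splitReach A S (a.1, false) (a.2, if a.2 ∈ S then true else false) :=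
  Relation.ReflTransGen.single (Or.inl (Finset.mem_image.mpr ⟨a, ha, rfl⟩))

/-- Reachability in the split graph where additionally the two copies of `w`
may be identified (jumped between). -/
def reachJ (A : Finset (V × V)) (S : Finset V) (w : V) : V × Bool → V × Bool → Prop :=
  Relation.ReflTransGen (fun x y =>
    ((x, y) ∈ splitArcs A S ∨ (y, x) ∈ splitArcs A S) ∨
    ((x = (w, false) ∧ y = (w, true)) ∨ (x = (w, true) ∧ y = (w, false))))

lemma reachJ_symm {A : Finset (V × V)} {S : Finset V} {w : V} {x y : V × Bool}
    (h : reachJ A S w x y) : reachJ A S w y x := by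
  induction h with
  | refl => exact .refl
  | tail _ h2 ih =>
    refine Relation.ReflTransGen.trans (.single ?_) ih
    rcases h2 with h2 | (⟨hb, hy⟩ | ⟨hb, hy⟩)
    · exact Or.inl h2.symm
    · exact Or.inr (Or.inr ⟨hy, hb⟩)
    · exact Or.inr (Or.inl ⟨hy, hb⟩)

lemma splitReach.reachJ {A : Finset (V × V)} {S : Finset V} {w : V} {x y : V × Bool}
    (h : splitReach A S x y) : reachJ A S w x y :=
  Relation.ReflTransGen.mono (fun _ _ h => Or.inl h) _ _ h

lemma reachJ_jump {A : Finset (V × V)} {S : Finset V} {w : V} :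
    reachJ A S w (w, false) (w, true) :=
  Relation.ReflTransGen.single (Or.inr (Or.inl ⟨rfl, rfl⟩))

/-- Lifting a single arc of the `S.erase w` split graph to the `S` split graph
with jumps at `w`. -/
lemma lift_arc {A : Finset (V × V)} {S : Finset V} {w : V} (hw : w ∈ S) {x y : V × Bool}
    (h : (x, y) ∈ splitArcs A (S.erase w)) : reachJ A S w x y := by
  rw [splitArcs, Finset.mem_image] at h
  obtain ⟨a, ha, heq⟩ := h
  have harcS : reachJ A S w (a.1, false) (a.2, if a.2 ∈ S then true else false) :=
    (splitReach_arc (S := S) ha).reachJ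
  obtain ⟨rfl, rfl⟩ := Prod.mk.inj heq
  by_cases h1 : a.2 ∈ S.erase w
  · have h2 : a.2 ∈ S := Finset.mem_of_mem_erase h1
    rw [if_pos h1]
    rw [if_pos h2] at harcS
    exact harcS
  · rw [if_neg h1]
    by_cases h2 : a.2 ∈ S
    · have h3 : a.2 = w := by
        by_contra hne
        exact h1 (Finset.mem_erase.mpr ⟨hne, h2⟩)
      rw [if_pos h2] at harcS
      subst h3
      exact harcS.trans (reachJ_symm reachJ_jump)
    · rw [if_neg h2] at harcS
      exact harcS

/-- Lifting reachability in the `S.erase w` split graph. -/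
lemma lift_reach {A : Finset (V × V)} {S : Finset V} {w : V} (hw : w ∈ S) {x y : V × Bool}
    (h : splitReach A (S.erase w) x y) : reachJ A S w x y := by
  induction h with
  | refl => exact .refl
  | tail _ h2 ih =>
    refine ih.trans ?_
    rcases h2 with h2 | h2
    · exact lift_arc hw h2
    · exact reachJ_symm (lift_arc hw h2)

/-- If the two copies of `w` are in fact connected, jumps can be eliminated. -/
lemma reachJ_collapse {A : Finset (V × V)} {S : Finset V} {w : V}
    (hw : splitReach A S (w, false) (w, true)) {x y : V × Bool}
    (h : reachJ A S w x y) : splitReach A S x y := by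
  induction h with
  | refl => exact .refl
  | tail _ h2 ih =>
    rcases h2 with h2 | h2
    · exact ih.tail h2
    · rcases h2 with ⟨hb, hy⟩ | ⟨hb, hy⟩
      · subst hb; subst hy; exact ih.trans hw
      · subst hb; subst hy; exact ih.trans (splitReach_symm hw)

/-- A `reachJ` path ends up connected (in the plain split graph) to its target
or to one of the two copies of `w`. -/
lemma reachJ_endpoint {A : Finset (V × V)} {S : Finset V} {w : V} {x y : V × Bool}
    (h : reachJ A S w x y) :
    splitReach A S x y ∨ splitReach A S x (w, false) ∨ splitReach A S x (w, true) := by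
  induction h with
  | refl => exact Or.inl .refl
  | @tail b c _ h2 ih =>
    rcases h2 with h2 | h2
    · rcases ih with ih | ih
      · exact Or.inl (ih.tail h2)
      · exact Or.inr ih
    · rcases h2 with ⟨hb, _⟩ | ⟨hb, _⟩
      · rcases ih with ih | ih
        · exact Or.inr (Or.inl (hb ▸ ih))
        · exact Or.inr ih
      · rcases ih with ih | ih
        · exact Or.inr (Or.inr (hb ▸ ih))
        · exact Or.inr ih

lemma card_filter_snd (A : Finset (V × V)) (Q : V → Prop) [DecidablePred Q] :
    (A.filter fun a => Q a.2).card = ∑ u ∈ Finset.univ.filter Q, inDeg A u := by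
  have : (A.filter fun a => Q a.2) =
      (Finset.univ.filter Q).biUnion (fun u => A.filter fun a => a.2 = u) := by
    ext a
    simp only [Finset.mem_filter, Finset.mem_biUnion, Finset.mem_univ, true_and]
    constructor
    · rintro ⟨ha, hq⟩; exact ⟨a.2, hq, ha, rfl⟩
    · rintro ⟨u, hq, ha, rfl⟩; exact ⟨ha, hq⟩
  rw [this, Finset.card_biUnion]
  · rfl
  · intro u _ v _ huv
    simp only [Finset.disjoint_filter]
    rintro a _ rfl h
    exact huv h

lemma card_filter_fst (A : Finset (V × V)) (Q : V → Prop) [DecidablePred Q] :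
    (A.filter fun a => Q a.1).card = ∑ u ∈ Finset.univ.filter Q, outDeg A u := by
  have : (A.filter fun a => Q a.1) =
      (Finset.univ.filter Q).biUnion (fun u => A.filter fun a => a.1 = u) := by
    ext a
    simp only [Finset.mem_filter, Finset.mem_biUnion, Finset.mem_univ, true_and]
    constructor
    · rintro ⟨ha, hq⟩; exact ⟨a.1, hq, ha, rfl⟩
    · rintro ⟨u, hq, ha, rfl⟩; exact ⟨ha, hq⟩
  rw [this, Finset.card_biUnion]
  · rfl
  · intro u _ v _ huv
    simp only [Finset.disjoint_filter]
    rintro a _ rfl h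
    exact huv h

end Aux

theorem minimal_split_set_even {V : Type*} [Fintype V] [DecidableEq V]
    (A : Finset (V × V))
    (hreg : ∀ v : V, inDeg A v = 2 ∧ outDeg A v = 2)
    (hconn : SplitConnected A (∅ : Finset V))
    (S : Finset V) (hsplit : ¬ SplitConnected A S)
    (hmin : ∀ T ⊂ S, SplitConnected A T) :
    Even S.card := by
  classical
  rcases S.eq_empty_or_nonempty with rfl | ⟨v, hv⟩
  · exact absurd hconn hsplit
  -- Key 1: no vertex of S has its two copies connected in the split graph
  have key1 : ∀ w ∈ S, ¬ splitReach A S (w, false) (w, true) := by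
    intro w hw hcon
    apply hsplit
    intro x hx y hy
    -- move endpoints into splitVerts (S.erase w)
    have adjust : ∀ z ∈ splitVerts S, ∃ z', z' ∈ splitVerts (S.erase w) ∧ splitReach A S z z' := by
      intro z hz
      rcases mem_splitVerts.mp hz with hb | hzS
      · refine ⟨z, mem_splitVerts.mpr (Or.inl hb), .refl⟩
      · by_cases hzw : z = (w, true)
        · exact ⟨(w, false), mem_splitVerts.mpr (Or.inl rfl), hzw ▸ splitReach_symm hcon⟩
        · refine ⟨z, mem_splitVerts.mpr ?_, .refl⟩
          obtain ⟨u, b⟩ := z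
          cases b
          · exact Or.inl rfl
          · exact Or.inr (Finset.mem_erase.mpr ⟨fun h => hzw (Prod.ext h rfl), hzS⟩)
    obtain ⟨x', hx', hxx'⟩ := adjust x hx
    obtain ⟨y', hy', hyy'⟩ := adjust y hy
    have h1 : splitReach A (S.erase w) x' y' :=
      hmin (S.erase w) (Finset.erase_ssubset hw) x' hx' y' hy'
    have h2 : splitReach A S x' y' := reachJ_collapse hcon (lift_reach hw h1)
    exact (hxx'.trans h2).trans (splitReach_symm hyy')
  -- Key 2: every split vertex reaches one of the two copies of v
  have key2 : ∀ x ∈ splitVerts S,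
      splitReach A S x (v, false) ∨ splitReach A S x (v, true) := by
    intro x hx
    have adjust : ∃ x', x' ∈ splitVerts (S.erase v) ∧ reachJ A S v x x' := by
      rcases mem_splitVerts.mp hx with hb | hxS
      · exact ⟨x, mem_splitVerts.mpr (Or.inl hb), .refl⟩
      · by_cases hxv : x = (v, true)
        · exact ⟨(v, false), mem_splitVerts.mpr (Or.inl rfl), hxv ▸ reachJ_symm reachJ_jump⟩
        · refine ⟨x, mem_splitVerts.mpr ?_, .refl⟩
          obtain ⟨u, b⟩ := x
          cases b
          · exact Or.inl rfl
          · exact Or.inr (Finset.mem_erase.mpr ⟨fun h => hxv (Prod.ext h rfl), hxS⟩)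
    obtain ⟨x', hx', hxx'⟩ := adjust
    have h1 : splitReach A (S.erase v) x' (v, false) :=
      hmin (S.erase v) (Finset.erase_ssubset hv) x' hx' (v, false)
        (mem_splitVerts.mpr (Or.inl rfl))
    have h2 : reachJ A S v x (v, false) := hxx'.trans (lift_reach hv h1)
    rcases reachJ_endpoint h2 with h | h | h
    · exact Or.inl h
    · exact Or.inl h
    · exact Or.inr h
  set P : V × Bool → Prop := fun x => splitReach A S x (v, false) with hP
  -- exactly one copy of each w ∈ S satisfies P
  have hvt : (v, true) ∈ splitVerts S := mem_splitVerts.mpr (Or.inr hv)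
  have hwf : ∀ w : V, (w, false) ∈ splitVerts S := fun w => mem_splitVerts.mpr (Or.inl rfl)
  have hwt : ∀ w ∈ S, (w, true) ∈ splitVerts S := fun w hw => mem_splitVerts.mpr (Or.inr hw)
  have excl : ∀ w ∈ S, ¬ (P (w, false) ∧ P (w, true)) := by
    rintro w hw ⟨h1, h2⟩
    exact key1 w hw (h1.trans (splitReach_symm h2))
  have tot : ∀ w ∈ S, P (w, false) ∨ P (w, true) := by
    intro w hw
    by_contra hcontra
    push_neg at hcontra
    obtain ⟨h1, h2⟩ := hcontra
    have r1 : splitReach A S (w, false) (v, true) := (key2 _ (hwf w)).resolve_left h1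
    have r2 : splitReach A S (w, true) (v, true) := (key2 _ (hwt w hw)).resolve_left h2
    exact key1 w hw (r1.trans (splitReach_symm r2))
  -- the set of arcs whose head copy satisfies P equals those whose tail copy does
  have harc : (A.filter fun a => P (a.2, if a.2 ∈ S then true else false)) =
      (A.filter fun a => P (a.1, false)) := by
    apply Finset.filter_congr
    intro a ha
    have step := splitReach_arc (S := S) ha
    constructor
    · intro h; exact step.trans h
    · intro h; exact (splitReach_symm step).trans h
  have hcard1 : (A.filter fun a => P (a.2, if a.2 ∈ S then true else false)).card =
      2 * (Finset.univ.filter fun u => P (u, if u ∈ S then true else false)).card := by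
    rw [card_filter_snd A (fun u => P (u, if u ∈ S then true else false))]
    rw [Finset.sum_congr rfl (fun u _ => (hreg u).1), Finset.sum_const, smul_eq_mul, mul_comm]
  have hcard2 : (A.filter fun a => P (a.1, false)).card =
      2 * (Finset.univ.filter fun u => P (u, false)).card := by
    rw [card_filter_fst A (fun u => P (u, false))]
    rw [Finset.sum_congr rfl (fun u _ => (hreg u).2), Finset.sum_const, smul_eq_mul, mul_comm]
  have hW : (Finset.univ.filter fun u => P (u, if u ∈ S then true else false)).card =
      (Finset.univ.filter fun u => P (u, false)).card := by
    have h := harc ▸ hcard1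
    omega
  -- split the two vertex sets by membership in S
  set W1 := Finset.univ.filter fun u => P (u, if u ∈ S then true else false) with hW1
  set W2 := Finset.univ.filter (fun u => P (u, false)) with hW2
  have e1 : W1.filter (fun u => u ∈ S) = S.filter fun w => P (w, true) := by
    ext u
    simp only [hW1, Finset.mem_filter, Finset.mem_univ, true_and]
    constructor
    · rintro ⟨h1, h2⟩; rw [if_pos h2] at h1; exact ⟨h2, h1⟩
    · rintro ⟨h1, h2⟩; exact ⟨by rw [if_pos h1]; exact h2, h1⟩
  have e2 : W2.filter (fun u => u ∈ S) = S.filter fun w => P (w, false) := by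
    ext u
    simp only [hW2, Finset.mem_filter, Finset.mem_univ, true_and]
    exact ⟨fun h => ⟨h.2, h.1⟩, fun h => ⟨h.2, h.1⟩⟩
  have e3 : W1.filter (fun u => ¬ u ∈ S) = W2.filter (fun u => ¬ u ∈ S) := by
    ext u
    simp only [hW1, hW2, Finset.mem_filter, Finset.mem_univ, true_and]
    constructor
    · rintro ⟨h1, h2⟩; rw [if_neg h2] at h1; exact ⟨h1, h2⟩
    · rintro ⟨h1, h2⟩; exact ⟨by rw [if_neg h2]; exact h1, h2⟩
  have hc1 := Finset.card_filter_add_card_filter_not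
    (s := W1) (p := fun u => u ∈ S)
  have hc2 := Finset.card_filter_add_card_filter_not
    (s := W2) (p := fun u => u ∈ S)
  rw [e1, e3] at hc1
  rw [e2] at hc2
  have hk : (S.filter fun w => P (w, true)).card = (S.filter fun w => P (w, false)).card := by
    omega
  have hS := Finset.card_filter_add_card_filter_not
    (s := S) (p := fun w => P (w, true))
  have e4 : S.filter (fun w => ¬ P (w, true)) = S.filter fun w => P (w, false) := by
    apply Finset.filter_congr
    intro w hw
    constructor
    · intro h; exact (tot w hw).resolve_right h
    · intro h1 h2; exact excl w hw ⟨h1, h2⟩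
  rw [e4] at hS
  exact ⟨(S.filter fun w => P (w, true)).card, by omega⟩
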